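/- For every infinite cardinal κ there exists a uniform ultrafilter p on κ such that, in the space u(κ) of uniform ultrafilters on κ, the point p has character 2^κ and local Noetherian type ω; i.e., p has an ω^op-like local base. -/

import Mathlib

open Cardinal TopologicalSpace

/-- The set of uniform ultrafilters on `K`: ultrafilters all of whose members have full
cardinality `#K`. -/
def UnifUlt (K : Type u) : Type u := {p : Ultrafilter K // ∀ s ∈ p, #s = #K}

/-- `u(κ)` is topologized by the basic (cl)open sets `x* = {q : x ∈ q}` for `x ⊆ κ`. -/
instance (K : Type u) : TopologicalSpace (UnifUlt K) :=
  generateFrom {B | ∃ x : Set K, B = {p : UnifUlt K | x ∈ p.1}}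

/-- `A` is a local base at `p`. -/
def IsLocalBase {X : Type u} [TopologicalSpace X] (p : X) (A : Set (Set X)) : Prop :=
  (∀ u ∈ A, IsOpen u ∧ p ∈ u) ∧ ∀ v : Set X, IsOpen v → p ∈ v → ∃ u ∈ A, u ⊆ v

/-- The character of `p`: the least cardinality of a local base at `p`. -/
noncomputable def charPt {X : Type u} [TopologicalSpace X] (p : X) : Cardinal.{u} :=
  sInf {c | ∃ A : Set (Set X), IsLocalBase p A ∧ c = #A}

set_option linter.unusedSectionVars false

section Aux
universe u
variable {K : Type u} [Infinite K]



-- uniform ultrafilter containing any set of full size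
theorem exists_unif (s : Set K) (hs : #s = #K) :
    ∃ q : Ultrafilter K, (∀ z ∈ q, #z = #K) ∧ s ∈ q := by
  set G : Filter K := Filter.mk
    {z | #↥(s \ z) < #K}
    (by simpa using aleph0_pos.trans_le (Cardinal.aleph0_le_mk K))
    (by
      intro z w hz hzw
      exact lt_of_le_of_lt (Cardinal.mk_le_mk_of_subset (Set.diff_subset_diff_right hzw)) hz)
    (by
      intro z w hz hw
      have : s \ (z ∩ w) = (s \ z) ∪ (s \ w) := Set.diff_inter
      calc #↥(s \ (z ∩ w)) = #↥((s \ z) ∪ (s \ w)) := by rw [this]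
        _ ≤ #↥(s \ z) + #↥(s \ w) := Cardinal.mk_union_le _ _
        _ < #K := Cardinal.add_lt_of_lt (Cardinal.aleph0_le_mk K) hz hw) with hG
  have hmemG : ∀ z, z ∈ G ↔ #↥(s \ z) < #K := fun z => Iff.rfl
  have hne : G.NeBot := by
    refine Filter.neBot_iff.2 fun h => ?_
    have : (∅ : Set K) ∈ G := h ▸ Filter.mem_bot
    rw [hmemG, Set.diff_empty, hs] at this
    exact absurd this (lt_irrefl _)
  obtain ⟨q, hq⟩ := Ultrafilter.exists_le G
  refine ⟨q, ?_, ?_⟩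
  · intro z hz
    by_contra hne'
    have hlt : #↥z < #K := lt_of_le_of_ne (Cardinal.mk_set_le z) hne'
    have : zᶜ ∈ G := by
      rw [hmemG, Set.diff_compl]
      exact lt_of_le_of_lt (Cardinal.mk_le_mk_of_subset Set.inter_subset_right) hlt
    exact absurd (q.toFilter.inter_mem hz (hq this)) (by simp)
  · exact hq (by rw [hmemG]; simpa using aleph0_pos.trans_le (Cardinal.aleph0_le_mk K))


def star' (x : Set K) : Set (UnifUlt K) := {q : UnifUlt K | x ∈ q.1}

theorem isOpen_star' (x : Set K) : IsOpen (star' x) :=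
  TopologicalSpace.GenerateOpen.basic _ ⟨x, rfl⟩

theorem star'_mono {x y : Set K} (h : x ⊆ y) : star' x ⊆ star' y :=
  fun q hq => q.1.toFilter.mem_of_superset hq h

theorem exists_unif' (s : Set K) (hs : #s = #K) : ∃ q : UnifUlt K, s ∈ q.1 := by
  obtain ⟨q, hq, hs'⟩ := exists_unif s hs
  exact ⟨⟨q, hq⟩, hs'⟩

theorem star'_subset_of_small {x y : Set K} (h : #↥(x \ y) < #K) : star' x ⊆ star' y := by
  intro q hq
  by_contra hy
  have hc : yᶜ ∈ q.1 := (Ultrafilter.compl_mem_iff_notMem).2 hy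
  have : x ∩ yᶜ ∈ q.1 := q.1.toFilter.inter_mem hq hc
  have := q.2 _ this
  rw [← Set.diff_eq] at this
  exact absurd this h.ne

theorem small_of_star'_subset {x y : Set K} (h : star' x ⊆ star' y) : #↥(x \ y) < #K := by
  by_contra hlt
  have heq : #↥(x \ y) = #K := le_antisymm (Cardinal.mk_set_le _) (not_lt.1 hlt)
  obtain ⟨q, hq⟩ := exists_unif' (x \ y) heq
  have hx : x ∈ q.1 := q.1.toFilter.mem_of_superset hq Set.diff_subset
  have hy : y ∈ q.1 := h hx
  have : y ∩ (x \ y) ∈ q.1 := q.1.toFilter.inter_mem hy hq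
  rw [Set.inter_diff_self] at this
  exact absurd this (Filter.empty_notMem (q.1 : Filter K))

theorem exists_basic {v : Set (UnifUlt K)} (hv : IsOpen v) {p : UnifUlt K} (hp : p ∈ v) :
    ∃ x ∈ p.1, star' x ⊆ v := by
  suffices h : ∀ w : Set (UnifUlt K),
      TopologicalSpace.GenerateOpen {B | ∃ x : Set K, B = {p : UnifUlt K | x ∈ p.1}} w →
      ∀ p : UnifUlt K, p ∈ w → ∃ x ∈ p.1, star' x ⊆ w from h v hv p hp
  intro w hw
  induction hw with
  | basic B hB =>
    intro p hp
    obtain ⟨x, rfl⟩ := hB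
    exact ⟨x, hp, subset_rfl⟩
  | univ => exact fun p _ => ⟨Set.univ, Filter.univ_mem, fun _ _ => trivial⟩
  | inter v₁ v₂ h₁ h₂ ih₁ ih₂ =>
    intro p hp
    obtain ⟨x₁, hx₁, hs₁⟩ := ih₁ p hp.1
    obtain ⟨x₂, hx₂, hs₂⟩ := ih₂ p hp.2
    refine ⟨x₁ ∩ x₂, p.1.toFilter.inter_mem hx₁ hx₂, fun q hq => ?_⟩
    exact ⟨hs₁ (q.1.toFilter.mem_of_superset hq Set.inter_subset_left),
      hs₂ (q.1.toFilter.mem_of_superset hq Set.inter_subset_right)⟩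
  | sUnion T hT ih =>
    intro p hp
    obtain ⟨t, htT, hpt⟩ := hp
    obtain ⟨x, hx, hs⟩ := ih t htT p hpt
    exact ⟨x, hx, hs.trans (Set.subset_sUnion_of_mem htT)⟩




theorem exists_indep (K : Type u) [Infinite K] : ∃ ind : Set K → Set K,
    ∀ F G : Finset (Set K), Disjoint F G →
      #↥((⋂ Y ∈ F, ind Y) ∩ ⋂ Y ∈ G, (ind Y)ᶜ) = #K := by
  classical
  -- the auxiliary type
  have hD : #(Finset K × Finset (Finset K)) = #K := by
    rw [Cardinal.mk_prod, Cardinal.lift_id, Cardinal.lift_id, Cardinal.mk_finset_of_infinite,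
      Cardinal.mk_finset_of_infinite, Cardinal.mk_finset_of_infinite,
      Cardinal.mul_eq_self (Cardinal.aleph0_le_mk K)]
  obtain ⟨e⟩ := Cardinal.eq.1 hD
  -- the independent family
  set ind : Set K → Set K := fun Y =>
    {k : K | (e.symm k).1.filter (fun a => a ∈ Y) ∈ (e.symm k).2} with hind
  refine ⟨ind, fun F G hFG => ?_⟩
  refine le_antisymm (Cardinal.mk_set_le _) ?_
  -- separating points
  have hw : ∀ Y Z : Set K, Y ≠ Z → ∃ a : K, ¬ (a ∈ Y ↔ a ∈ Z) := by
    intro Y Z hne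
    by_contra h
    push_neg at h
    exact hne (Set.ext h)
  set w : Set K × Set K → K := fun q =>
    if h : q.1 ≠ q.2 then Classical.choose (hw q.1 q.2 h) else Classical.arbitrary K with hwdef
  set s₀ : Finset K := (F ×ˢ G).image w with hs₀
  -- the injection
  have key : ∀ k : K, (e (insert k s₀, F.image fun Y => (insert k s₀).filter (fun a => a ∈ Y))) ∈
      ((⋂ Y ∈ F, ind Y) ∩ ⋂ Y ∈ G, (ind Y)ᶜ) := by
    intro k
    constructor
    · simp only [Set.mem_iInter]
      intro Y hY
      show _ ∈ _
      simp only [hind, Set.mem_setOf_eq, Equiv.symm_apply_apply]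
      exact Finset.mem_image_of_mem _ hY
    · simp only [Set.mem_iInter]
      intro Z hZ
      simp only [hind, Set.mem_compl_iff, Set.mem_setOf_eq, Equiv.symm_apply_apply]
      intro hmem
      obtain ⟨Y, hYF, hEq⟩ := Finset.mem_image.1 hmem
      have hYZ : Y ≠ Z := by
        rintro rfl
        exact (Finset.disjoint_left.1 hFG) hYF hZ
      have hwmem : w (Y, Z) ∈ insert k s₀ := by
        refine Finset.mem_insert_of_mem ?_
        exact Finset.mem_image_of_mem w (Finset.mem_product.2 ⟨hYF, hZ⟩)
      have hspec : ¬ (w (Y, Z) ∈ Y ↔ w (Y, Z) ∈ Z) := by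
        have : w (Y, Z) = Classical.choose (hw Y Z hYZ) := by
          simp only [hwdef, dif_pos (show (Y,Z).1 ≠ (Y,Z).2 from hYZ)]
        rw [this]
        exact Classical.choose_spec (hw Y Z hYZ)
      apply hspec
      constructor
      · intro hy
        have : w (Y, Z) ∈ (insert k s₀).filter (fun a => a ∈ Y) := Finset.mem_filter.2 ⟨hwmem, hy⟩
        rw [hEq] at this
        exact (Finset.mem_filter.1 this).2
      · intro hz
        have : w (Y, Z) ∈ (insert k s₀).filter (fun a => a ∈ Z) := Finset.mem_filter.2 ⟨hwmem, hz⟩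
        rw [← hEq] at this
        exact (Finset.mem_filter.1 this).2
  -- cardinality of complement of s₀
  have hcompl : #↥((↑s₀ : Set K)ᶜ) = #K :=
    Cardinal.mk_compl_of_infinite _ ((s₀.finite_toSet).lt_aleph0.trans_le (Cardinal.aleph0_le_mk K))
  rw [← hcompl]
  refine Cardinal.mk_le_of_injective (f := fun k : ↥((↑s₀ : Set K)ᶜ) =>
    (⟨e (insert k.1 s₀, F.image fun Y => (insert k.1 s₀).filter (fun a => a ∈ Y)), key k.1⟩ :
      ↥((⋂ Y ∈ F, ind Y) ∩ ⋂ Y ∈ G, (ind Y)ᶜ))) ?_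
  intro k k' hkk'
  simp only [Subtype.mk.injEq] at hkk'
  have := e.injective hkk'
  have hins : insert k.1 s₀ = insert k'.1 s₀ := congrArg Prod.fst this
  have : k.1 ∈ insert k'.1 s₀ := hins ▸ Finset.mem_insert_self k.1 s₀
  rcases Finset.mem_insert.1 this with h | h
  · exact Subtype.ext h
  · exact absurd (Finset.mem_coe.2 h) k.2




section Core
variable (ind : Set K → Set K)

/-- `z` is "small": almost contained (mod `< κ`) in infinitely many members of the family. -/
def Sml (z : Set K) : Prop := {Y : Set K | #↥(z \ ind Y) < #K}.Infinite

/-- the ideal generated by small sets -/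
def InJ (x : Set K) : Prop :=
  ∃ l : List (Set K), (∀ z ∈ l, Sml ind z) ∧ x ⊆ ⋃₀ {z | z ∈ l}

variable {ind}

theorem Sml.of_small {z : Set K} (h : #↥z < #K) : Sml ind z := by
  have : {Y : Set K | #↥(z \ ind Y) < #K} = Set.univ := by
    ext Y
    simp only [Set.mem_setOf_eq, Set.mem_univ, iff_true]
    exact lt_of_le_of_lt (Cardinal.mk_le_mk_of_subset Set.diff_subset) h
  unfold Sml
  rw [this]
  exact Set.infinite_univ

theorem InJ.mono {x y : Set K} (h : InJ ind y) (hxy : x ⊆ y) : InJ ind x := by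
  obtain ⟨l, hl, hsub⟩ := h
  exact ⟨l, hl, hxy.trans hsub⟩

theorem InJ.union {x y : Set K} (hx : InJ ind x) (hy : InJ ind y) : InJ ind (x ∪ y) := by
  obtain ⟨l, hl, hsub⟩ := hx
  obtain ⟨l', hl', hsub'⟩ := hy
  refine ⟨l ++ l', fun z hz => ?_, ?_⟩
  · rcases List.mem_append.1 hz with h | h
    exacts [hl z h, hl' z h]
  · refine Set.union_subset (hsub.trans ?_) (hsub'.trans ?_) <;>
      apply Set.sUnion_subset_sUnion <;> intro z hz <;> simp only [Set.mem_setOf_eq] at * <;>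
      simp [List.mem_append, hz]

variable (hind : ∀ F G : Finset (Set K), Disjoint F G →
  #↥((⋂ Y ∈ F, ind Y) ∩ ⋂ Y ∈ G, (ind Y)ᶜ) = #K)
include hind

/-- Core lemma: finite intersections of the family escape the ideal robustly. -/
theorem core (l : List (Set K)) (hl : ∀ z ∈ l, Sml ind z) :
    ∀ F G : Finset (Set K), Disjoint F G →
      #↥((((⋂ Y ∈ F, ind Y) ∩ ⋂ Y ∈ G, (ind Y)ᶜ)) \ ⋃₀ {z | z ∈ l}) = #K := by
  classical
  induction l with
  | nil =>
    intro F G hFG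
    have : {z : Set K | z ∈ ([] : List (Set K))} = ∅ := by simp
    rw [this, Set.sUnion_empty, Set.diff_empty]
    exact hind F G hFG
  | cons z l ih =>
    intro F G hFG
    have hz : Sml ind z := hl z List.mem_cons_self
    obtain ⟨Ys, hYs, hYnotin⟩ :
        ∃ Ys, Ys ∈ {Y : Set K | #↥(z \ ind Y) < #K} ∧ Ys ∉ (↑(F ∪ G) : Set (Set K)) := by
      have := (hz.diff (F ∪ G).finite_toSet).nonempty
      obtain ⟨Ys, hYs⟩ := this
      exact ⟨Ys, hYs.1, hYs.2⟩
    have hYsF : Ys ∉ F := fun h => hYnotin (by simp [h])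
    have hYsG : Ys ∉ G := fun h => hYnotin (by simp [h])
    have hdisj : Disjoint F (insert Ys G) := by
      rw [Finset.disjoint_insert_right]
      exact ⟨hYsF, hFG⟩
    have hc := ih (fun w hw => hl w (List.mem_cons_of_mem z hw)) F (insert Ys G) hdisj
    set c := (((⋂ Y ∈ F, ind Y) ∩ ⋂ Y ∈ insert Ys G, (ind Y)ᶜ)) \ ⋃₀ {w | w ∈ l} with hcdef
    set t := (((⋂ Y ∈ F, ind Y) ∩ ⋂ Y ∈ G, (ind Y)ᶜ)) \ ⋃₀ {w | w ∈ z :: l} with htdef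
    have hsub : c \ z ⊆ t := by
      rintro a ⟨⟨⟨haF, haG'⟩, hanot⟩, haz⟩
      refine ⟨⟨haF, ?_⟩, ?_⟩
      · simp only [Set.mem_iInter] at haG' ⊢
        intro Y hY
        exact haG' Y (Finset.mem_insert_of_mem hY)
      · rintro ⟨w, hw, haw⟩
        simp only [Set.mem_setOf_eq, List.mem_cons] at hw
        rcases hw with rfl | hw
        · exact haz haw
        · exact hanot ⟨w, hw, haw⟩
    have hcz : c ∩ z ⊆ z \ ind Ys := by
      rintro a ⟨⟨⟨_, haG'⟩, _⟩, haz⟩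
      refine ⟨haz, ?_⟩
      simp only [Set.mem_iInter] at haG'
      exact haG' Ys (Finset.mem_insert_self Ys G)
    have hczlt : #↥(c ∩ z) < #K := lt_of_le_of_lt (Cardinal.mk_le_mk_of_subset hcz) hYs
    have hlarge : ¬ #↥(c \ z) < #K := by
      intro hlt
      have : c ⊆ (c \ z) ∪ (c ∩ z) := by
        intro a ha
        by_cases h : a ∈ z
        · exact Or.inr ⟨ha, h⟩
        · exact Or.inl ⟨ha, h⟩
      have : #↥c ≤ #↥(c \ z) + #↥(c ∩ z) :=
        le_trans (Cardinal.mk_le_mk_of_subset this) (Cardinal.mk_union_le _ _)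
      rw [hc] at this
      exact absurd (lt_of_le_of_lt this
        (Cardinal.add_lt_of_lt (Cardinal.aleph0_le_mk K) hlt hczlt)) (lt_irrefl _)
    exact le_antisymm (Cardinal.mk_set_le _)
      (le_trans (not_lt.1 hlarge) (Cardinal.mk_le_mk_of_subset hsub))

theorem not_inJ_of_inter (F : Finset (Set K)) {x : Set K} (hx : (⋂ Y ∈ F, ind Y) ⊆ x) :
    ¬ InJ ind x := by
  classical
  rintro ⟨l, hl, hsub⟩
  have := core hind l hl F ∅ (Finset.disjoint_empty_right F)
  have hne : ((((⋂ Y ∈ F, ind Y) ∩ ⋂ Y ∈ (∅ : Finset (Set K)), (ind Y)ᶜ)) \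
      ⋃₀ {z | z ∈ l}).Nonempty := by
    rw [← Set.nonempty_coe_sort]
    refine Cardinal.mk_ne_zero_iff.1 ?_
    rw [this]
    exact Cardinal.mk_ne_zero K
  obtain ⟨a, ⟨haF, _⟩, hanot⟩ := hne
  exact hanot (hsub (hx haF))

end Core



def IsGood (ind : Set K → Set K) (G : Set (Set K)) : Prop :=
  (∀ Y, ind Y ∈ G) ∧ (∀ a b : Set K, a ∈ G → a ⊆ b → b ∈ G) ∧
    (∀ a b : Set K, a ∈ G → b ∈ G → a ∩ b ∈ G) ∧ (∀ a ∈ G, ¬ InJ ind a)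

theorem singleton_inJ {ind : Set K → Set K} {z : Set K} (h : Sml ind z) : InJ ind z :=
  ⟨[z], by simpa using h, by intro a ha; exact ⟨z, by simp, ha⟩⟩

theorem exists_max (ind : Set K → Set K)
    (hind : ∀ F G : Finset (Set K), Disjoint F G →
      #↥((⋂ Y ∈ F, ind Y) ∩ ⋂ Y ∈ G, (ind Y)ᶜ) = #K) :
    ∃ M : Set (Set K), IsGood ind M ∧ ∀ s : Set K, s ∉ M → sᶜ ∈ M := by
  classical
  set F₀ : Set (Set K) := {x | ∃ F : Finset (Set K), (⋂ Y ∈ F, ind Y) ⊆ x} with hF₀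
  have hgood₀ : IsGood ind F₀ := by
    refine ⟨fun Y => ⟨{Y}, by rw [Finset.set_biInter_singleton]⟩,
      fun a b ⟨F, hF⟩ hab => ⟨F, hF.trans hab⟩, ?_, ?_⟩
    · rintro a b ⟨F, hF⟩ ⟨F', hF'⟩
      refine ⟨F ∪ F', ?_⟩
      intro k hk
      simp only [Set.mem_iInter] at hk
      exact ⟨hF (Set.mem_iInter₂.2 fun Y hY => hk Y (Finset.mem_union_left _ hY)),
        hF' (Set.mem_iInter₂.2 fun Y hY => hk Y (Finset.mem_union_right _ hY))⟩
    · rintro a ⟨F, hF⟩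
      exact not_inJ_of_inter hind F hF
  obtain ⟨M, hFM, hMmax⟩ := zorn_subset_nonempty {G | IsGood ind G}
    (fun c hc hchain hne => by
      obtain ⟨t₀, ht₀⟩ := hne
      refine ⟨⋃₀ c, ⟨fun Y => ⟨t₀, ht₀, (hc ht₀).1 Y⟩, ?_, ?_, ?_⟩, fun s hs => Set.subset_sUnion_of_mem hs⟩
      · rintro a b ⟨t, htc, hat⟩ hab
        exact ⟨t, htc, (hc htc).2.1 a b hat hab⟩
      · rintro a b ⟨t, htc, hat⟩ ⟨t', htc', hbt'⟩
        rcases hchain.total htc htc' with h | h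
        · exact ⟨t', htc', (hc htc').2.2.1 a b (h hat) hbt'⟩
        · exact ⟨t, htc, (hc htc).2.2.1 a b hat (h hbt')⟩
      · rintro a ⟨t, htc, hat⟩
        exact (hc htc).2.2.2 a hat) F₀ hgood₀
  have hMgood : IsGood ind M := hMmax.1
  refine ⟨M, hMgood, ?_⟩
  intro s hs
  by_contra hsc
  -- extend M by s
  have key : ∀ x : Set K, x ∉ M → ∃ m ∈ M, InJ ind (m ∩ x) := by
    intro x hx
    set M' : Set (Set K) := {z | ∃ m ∈ M, m ∩ x ⊆ z} with hM'
    have hMM' : M ⊆ M' := fun m hm => ⟨m, hm, Set.inter_subset_left⟩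
    by_contra hno
    push_neg at hno
    have hM'good : IsGood ind M' := by
      refine ⟨fun Y => hMM' (hMgood.1 Y), ?_, ?_, ?_⟩
      · rintro a b ⟨m, hm, hma⟩ hab
        exact ⟨m, hm, hma.trans hab⟩
      · rintro a b ⟨m, hm, hma⟩ ⟨m', hm', hm'b⟩
        refine ⟨m ∩ m', hMgood.2.2.1 m m' hm hm', ?_⟩
        intro k hk
        exact ⟨hma ⟨hk.1.1, hk.2⟩, hm'b ⟨hk.1.2, hk.2⟩⟩
      · rintro a ⟨m, hm, hma⟩ hJ
        exact hno m hm (hJ.mono hma)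
    have : M' ⊆ M := hMmax.2 hM'good hMM'
    have huniv : Set.univ ∈ M := hMgood.2.1 (ind Set.univ) Set.univ (hMgood.1 Set.univ) (Set.subset_univ _)
    exact hx (this ⟨Set.univ, huniv, by simp⟩)
  obtain ⟨m, hm, hJ⟩ := key s hs
  obtain ⟨m', hm', hJ'⟩ := key sᶜ hsc
  have hsub : m ∩ m' ⊆ (m ∩ s) ∪ (m' ∩ sᶜ) := by
    intro a ha
    by_cases h : a ∈ s
    · exact Or.inl ⟨ha.1, h⟩
    · exact Or.inr ⟨ha.2, h⟩
  exact hMgood.2.2.2 _ (hMgood.2.2.1 m m' hm hm') ((hJ.union hJ').mono hsub)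


end Aux

/-- For every infinite cardinal `κ` (realized as `#K`), there is a uniform ultrafilter
`p` on `κ` such that in `u(κ)` the point `p` has character `2^κ` and an `ω`-op-like
local base (no member contained in infinitely many members), i.e. local Noetherian
type `ω`. -/
theorem exists_uniform_ultrafilter_char_two_pow_locNt_omega (K : Type u) [Infinite K] :
    ∃ p : UnifUlt K, charPt p = 2 ^ #K ∧
      ∃ A : Set (Set (UnifUlt K)), IsLocalBase p A ∧
        ∀ u ∈ A, {v | v ∈ A ∧ u ⊂ v}.Finite := by
  classical
  obtain ⟨ind, hind⟩ := exists_indep K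
  obtain ⟨M, hMgood, hdich⟩ := exists_max ind hind
  have hnoJ : ∀ a ∈ M, ¬ InJ ind a := hMgood.2.2.2
  have hnotSml : ∀ a ∈ M, ¬ Sml ind a := fun a ha hs => hnoJ a ha (singleton_inJ hs)
  have hbig : ∀ a ∈ M, #↥a = #K := by
    intro a ha
    refine le_antisymm (Cardinal.mk_set_le a) (not_lt.1 fun h => ?_)
    exact hnotSml a ha (Sml.of_small h)
  -- the ultrafilter
  have huniv : Set.univ ∈ M :=
    hMgood.2.1 (ind Set.univ) Set.univ (hMgood.1 Set.univ) (Set.subset_univ _)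
  set f : Filter K :=
    { sets := M
      univ_sets := huniv
      sets_of_superset := fun {a b} ha hab => hMgood.2.1 a b ha hab
      inter_sets := fun {a b} ha hb => hMgood.2.2.1 a b ha hb } with hf
  have hmemf : ∀ z : Set K, z ∈ f ↔ z ∈ M := fun z => Iff.rfl
  have hcompl : ∀ s : Set K, sᶜ ∉ f ↔ s ∈ f := by
    intro s
    constructor
    · intro h
      by_contra hs
      exact h ((hmemf _).2 (hdich s fun hsM => hs ((hmemf _).2 hsM)))
    · intro hs hsc
      have : s ∩ sᶜ ∈ M := hMgood.2.2.1 s sᶜ ((hmemf _).1 hs) ((hmemf _).1 hsc)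
      rw [Set.inter_compl_self] at this
      exact hnoJ ∅ this (singleton_inJ (Sml.of_small (by
        simpa using aleph0_pos.trans_le (Cardinal.aleph0_le_mk K))))
  set q : Ultrafilter K := Ultrafilter.ofComplNotMemIff f hcompl with hq
  have hmemq : ∀ z : Set K, z ∈ q ↔ z ∈ M := fun z => Iff.rfl
  set p : UnifUlt K := ⟨q, fun s hs => hbig s ((hmemq s).1 hs)⟩ with hp
  have hmemp : ∀ z : Set K, z ∈ p.1 ↔ z ∈ M := hmemq
  -- the local base
  set E : Set K → Set K := fun Y => ind Y ∩ (if Y ∈ M then Y else Set.univ) with hE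
  have hEM : ∀ Y, E Y ∈ M := by
    intro Y
    refine hMgood.2.2.1 _ _ (hMgood.1 Y) ?_
    split
    · assumption
    · exact hMgood.2.1 (ind Set.univ) Set.univ (hMgood.1 Set.univ) (Set.subset_univ _)
  have hEind : ∀ Y, E Y ⊆ ind Y := fun Y => Set.inter_subset_left
  set xF : Finset (Set K) → Set K := fun F => ⋂ Y ∈ F, E Y with hxF
  have hxFM : ∀ F, xF F ∈ M := by
    intro F
    induction F using Finset.induction_on with
    | empty =>
      have : xF ∅ = Set.univ := by simp [hxF]
      rw [this]
      exact hMgood.2.1 (ind Set.univ) Set.univ (hMgood.1 Set.univ) (Set.subset_univ _)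
    | insert _ _ hnot ih =>
      rename_i a s
      have : xF (insert a s) = E a ∩ xF s := by
        simp only [hxF, Finset.set_biInter_insert]
      rw [this]
      exact hMgood.2.2.1 _ _ (hEM a) ih
  have hxFsub : ∀ F (Y : Set K), Y ∈ F → xF F ⊆ ind Y := by
    intro F Y hY
    intro a ha
    simp only [hxF, Set.mem_iInter] at ha
    exact hEind Y (ha Y hY)
  set 𝒜 : Set (Set (UnifUlt K)) := Set.range (fun F : Finset (Set K) => star' (xF F)) with h𝒜
  have hbase : IsLocalBase p 𝒜 := by
    constructor
    · rintro u ⟨F, rfl⟩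
      exact ⟨isOpen_star' _, (hmemp _).2 (hxFM F)⟩
    · intro v hv hpv
      obtain ⟨y, hy, hsub⟩ := exists_basic hv hpv
      have hyM : y ∈ M := (hmemp y).1 hy
      refine ⟨star' (xF {y}), ⟨{y}, rfl⟩, ?_⟩
      have h1 : xF {y} ⊆ y := by
        have : xF {y} = E y := by simp [hxF, Finset.set_biInter_singleton]
        rw [this, hE]
        simp only [if_pos hyM]
        exact Set.inter_subset_right
      exact (star'_mono h1).trans hsub
  -- lower bound for arbitrary local bases
  have hlow : ∀ B : Set (Set (UnifUlt K)), IsLocalBase p B → 2 ^ #K ≤ #↥B := by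
    intro B hB
    have hxi : ∀ u : ↥B, ∃ x : Set K, x ∈ M ∧ star' x ⊆ ↑u := by
      intro u
      obtain ⟨ho, hpu⟩ := hB.1 u u.2
      obtain ⟨x, hx, hs⟩ := exists_basic ho hpu
      exact ⟨x, (hmemp x).1 hx, hs⟩
    choose ξ hξM hξsub using hxi
    have hg : ∀ Y : Set K, ∃ u : ↥B, ↑u ⊆ star' (ind Y) := by
      intro Y
      obtain ⟨u, huB, hsub⟩ := hB.2 (star' (ind Y)) (isOpen_star' _) ((hmemp _).2 (hMgood.1 Y))
      exact ⟨⟨u, huB⟩, hsub⟩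
    choose g hgsub using hg
    have hfib : ∀ u : ↥B, {Y : Set K | g Y = u}.Finite := by
      intro u
      have hsubT : {Y : Set K | g Y = u} ⊆ {Y : Set K | #↥(ξ u \ ind Y) < #K} := by
        intro Y hY
        simp only [Set.mem_setOf_eq] at hY ⊢
        have h1 : star' (ξ u) ⊆ star' (ind Y) := by
          refine (hξsub u).trans ?_
          rw [← hY]
          exact hgsub Y
        exact small_of_star'_subset h1
      refine Set.Finite.subset (Set.not_infinite.1 ?_) hsubT
      exact fun h => hnotSml _ (hξM u) h
    have hcard : #(Set K) ≤ #↥B * ℵ₀ := by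
      have h1 : #(Set K) = #(Σ u : ↥B, {Y : Set K // g Y = u}) :=
        mk_congr (Equiv.sigmaFiberEquiv g).symm
      rw [h1, Cardinal.mk_sigma]
      refine le_trans (Cardinal.sum_le_sum _ (fun _ => ℵ₀) fun u => ?_) ?_
      · exact le_of_lt (Cardinal.lt_aleph0_iff_set_finite.2 (hfib u))
      · rw [Cardinal.sum_const']
    rw [← Cardinal.mk_set]
    by_contra hlt
    push_neg at hlt
    have h2 : (ℵ₀ : Cardinal) < #(Set K) := by
      rw [Cardinal.mk_set]
      exact lt_of_le_of_lt (Cardinal.aleph0_le_mk K) (Cardinal.cantor _)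
    exact absurd (lt_of_le_of_lt hcard
      (Cardinal.mul_lt_of_lt h2.le hlt h2)) (lt_irrefl _)
  refine ⟨p, ?_, 𝒜, hbase, ?_⟩
  · -- character computation
    have h𝒜le : #↥𝒜 ≤ 2 ^ #K := by
      refine le_trans (Cardinal.mk_range_le) ?_
      rw [Cardinal.mk_finset_of_infinite, Cardinal.mk_set]
    have h𝒜eq : #↥𝒜 = 2 ^ #K := le_antisymm h𝒜le (hlow 𝒜 hbase)
    unfold charPt
    refine le_antisymm (csInf_le (OrderBot.bddBelow _) ⟨𝒜, hbase, h𝒜eq.symm⟩) ?_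
    refine le_csInf ⟨2 ^ #K, 𝒜, hbase, h𝒜eq.symm⟩ ?_
    rintro c ⟨A, hA, rfl⟩
    exact hlow A hA
  · -- ω-op-like
    rintro u ⟨F, rfl⟩
    have hTfin : {Y : Set K | #↥(xF F \ ind Y) < #K}.Finite :=
      Set.not_infinite.1 fun h => hnotSml _ (hxFM F) h
    set T := {Y : Set K | #↥(xF F \ ind Y) < #K} with hT
    have hGfin : {G : Finset (Set K) | ↑G ⊆ T}.Finite := by
      have := hTfin.finite_subsets
      refine Set.Finite.preimage ?_ this
      exact fun a _ b _ h => Finset.coe_injective h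
    refine Set.Finite.subset (hGfin.image (fun G => star' (xF G))) ?_
    rintro v ⟨⟨G, rfl⟩, hlt⟩
    refine ⟨G, ?_, rfl⟩
    have hsmall : #↥(xF F \ xF G) < #K := small_of_star'_subset hlt.1
    intro Y hYG
    have hYG' : Y ∈ G := hYG
    have hsub2 : xF F \ ind Y ⊆ xF F \ xF G := by
      intro a ha
      exact ⟨ha.1, fun haG => ha.2 (hxFsub G Y hYG' haG)⟩
    exact lt_of_le_of_lt (Cardinal.mk_le_mk_of_subset hsub2) hsmall
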